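/- Let V = ⊕_{k∈ℤ} V_k be a ℤ-graded 𝔅-module. For each a ∈ ℂ the subspace V[a] = ⊕_{k∈ℤ} {v ∈ V_k : L(0,0)·v = (a+k)·v} is a graded 𝔅-submodule of V. Moreover, if V is nonzero, irreducible and quasifinite, then there exists a ∈ ℂ such that V = V[a], i.e. L(0,0) acts on each graded piece V_k as the scalar a+k. -/

import Mathlib

/-- The Lie algebra `𝔅` of Block type: a complex Lie algebra `B` equipped with a basis
`{L α i : α ∈ ℤ, i ∈ ℕ} ∪ {C}` where `C` is central and
`[L α i, L β j] = ((i+1)β − (j+1)α)·L (α+β) (i+j) + δ_{α+β,0}·δ_{i+j,0}·((α³−α)/6)·C`. -/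
structure BlockData (B : Type) [LieRing B] [LieAlgebra ℂ B] where
  L : ℤ → ℕ → B
  C : B
  central : ∀ x : B, ⁅C, x⁆ = 0
  bracket_L : ∀ (α β : ℤ) (i j : ℕ),
    ⁅L α i, L β j⁆
      = (((i : ℂ) + 1) * (β : ℂ) - ((j : ℂ) + 1) * (α : ℂ)) • L (α + β) (i + j)
        + (if α + β = 0 ∧ i + j = 0 then ((α : ℂ) ^ 3 - (α : ℂ)) / 6 else 0) • C
  indep : LinearIndependent ℂ (Sum.elim (fun p : ℤ × ℕ => L p.1 p.2) (fun _ : Unit => C))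
  span_top : Submodule.span ℂ
      (Set.range (Sum.elim (fun p : ℤ × ℕ => L p.1 p.2) (fun _ : Unit => C))) = ⊤

variable {B : Type} [LieRing B] [LieAlgebra ℂ B]
variable {V : Type} [AddCommGroup V] [Module ℂ V] [LieRingModule B V] [LieModule ℂ B V]

/-- A `ℤ`-grading `V = ⊕ₖ Vₖ` on a `𝔅`-module, compatible with the grading of `𝔅`:
`𝔅^(α)·Vₖ ⊆ V_{α+k}` (where `𝔅^(α) = span{L α i : i ≥ 0} ⊕ δ_{α,0} ℂ C`). -/
structure GradedBMod (𝔟 : BlockData B) (V : Type) [AddCommGroup V] [Module ℂ V]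
    [LieRingModule B V] [LieModule ℂ B V] where
  piece : ℤ → Submodule ℂ V
  isInternal : DirectSum.IsInternal piece
  lie_L_mem : ∀ (α : ℤ) (i : ℕ) (k : ℤ) (v : V), v ∈ piece k → ⁅𝔟.L α i, v⁆ ∈ piece (α + k)
  lie_C_mem : ∀ (k : ℤ) (v : V), v ∈ piece k → ⁅𝔟.C, v⁆ ∈ piece k

/-- A Lie submodule is graded if it is the (direct) sum of its intersections with the
graded pieces. -/
def GradedBMod.IsGradedSubmodule {𝔟 : BlockData B} (gr : GradedBMod 𝔟 V)
    (W : LieSubmodule ℂ B V) : Prop :=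
  (W : Submodule ℂ V) = ⨆ k : ℤ, (W : Submodule ℂ V) ⊓ gr.piece k

/-- A graded module is (graded-)irreducible if it is nonzero and has no graded submodule
other than `0` and `V`. -/
def GradedBMod.Irreducible {𝔟 : BlockData B} (gr : GradedBMod 𝔟 V) : Prop :=
  (∃ v : V, v ≠ 0) ∧
    ∀ W : LieSubmodule ℂ B V, gr.IsGradedSubmodule W → W = ⊥ ∨ W = ⊤

/-- Quasifinite: all graded pieces are finite dimensional. -/
def GradedBMod.Quasifinite {𝔟 : BlockData B} (gr : GradedBMod 𝔟 V) : Prop :=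
  ∀ k : ℤ, FiniteDimensional ℂ (gr.piece k)

/-- Uniformly bounded: the dimensions of the graded pieces are uniformly bounded. -/
def GradedBMod.UniformlyBounded {𝔟 : BlockData B} (gr : GradedBMod 𝔟 V) : Prop :=
  ∃ N : ℕ, ∀ k : ℤ, Module.rank ℂ (gr.piece k) ≤ N

/-- A module of the intermediate series: all graded pieces have dimension at most one. -/
def GradedBMod.IntermediateSeries {𝔟 : BlockData B} (gr : GradedBMod 𝔟 V) : Prop :=
  ∀ k : ℤ, Module.rank ℂ (gr.piece k) ≤ 1

/-- Highest weight module: generated by a nonzero `v ∈ V₀` which is a common eigenvector of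
all `L 0 i` and of `C` and is annihilated by all `L α i` with `α > 0`. -/
def GradedBMod.IsHighestWeight {𝔟 : BlockData B} (gr : GradedBMod 𝔟 V) : Prop :=
  ∃ v : V, v ≠ 0 ∧ v ∈ gr.piece 0 ∧
    (∀ i : ℕ, ∃ c : ℂ, ⁅𝔟.L 0 i, v⁆ = c • v) ∧ (∃ c : ℂ, ⁅𝔟.C, v⁆ = c • v) ∧
    (∀ α : ℤ, 0 < α → ∀ i : ℕ, ⁅𝔟.L α i, v⁆ = 0) ∧
    LieSubmodule.lieSpan ℂ B {v} = ⊤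

/-- Lowest weight module. -/
def GradedBMod.IsLowestWeight {𝔟 : BlockData B} (gr : GradedBMod 𝔟 V) : Prop :=
  ∃ v : V, v ≠ 0 ∧ v ∈ gr.piece 0 ∧
    (∀ i : ℕ, ∃ c : ℂ, ⁅𝔟.L 0 i, v⁆ = c • v) ∧ (∃ c : ℂ, ⁅𝔟.C, v⁆ = c • v) ∧
    (∀ α : ℤ, α < 0 → ∀ i : ℕ, ⁅𝔟.L α i, v⁆ = 0) ∧
    LieSubmodule.lieSpan ℂ B {v} = ⊤


/-- `⁅L 0 0, L α i⁆ = α • L α i`. -/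
lemma BlockData.brL00 (𝔟 : BlockData B) (α : ℤ) (i : ℕ) :
    ⁅𝔟.L 0 0, 𝔟.L α i⁆ = (α : ℂ) • 𝔟.L α i := by
  rw [𝔟.bracket_L]
  split_ifs with h
  · obtain ⟨h1, h2⟩ := h
    simp only [zero_add] at h1 h2
    subst h1; subst h2
    norm_num
  · push_cast
    simp

/-- Part 1, `L` case as a standalone lemma. -/
lemma part1L (𝔟 : BlockData B) (gr : GradedBMod 𝔟 V) (a : ℂ) (α : ℤ) (i : ℕ) (k : ℤ) (v : V)
    (hv : v ∈ gr.piece k ⊓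
        Module.End.eigenspace (LieModule.toEnd ℂ B V (𝔟.L 0 0)) (a + (k : ℂ))) :
    ⁅𝔟.L α i, v⁆ ∈ gr.piece (α + k) ⊓
        Module.End.eigenspace (LieModule.toEnd ℂ B V (𝔟.L 0 0)) (a + ((α + k : ℤ) : ℂ)) := by
  obtain ⟨hv1, hv2⟩ := Submodule.mem_inf.mp hv
  rw [Module.End.mem_eigenspace_iff, LieModule.toEnd_apply_apply] at hv2
  rw [Submodule.mem_inf]
  refine ⟨gr.lie_L_mem α i k v hv1, ?_⟩
  rw [Module.End.mem_eigenspace_iff, LieModule.toEnd_apply_apply]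
  have hleib : ⁅𝔟.L 0 0, ⁅𝔟.L α i, v⁆⁆
      = ⁅⁅𝔟.L 0 0, 𝔟.L α i⁆, v⁆ + ⁅𝔟.L α i, ⁅𝔟.L 0 0, v⁆⁆ := leibniz_lie _ _ _
  rw [hleib, 𝔟.brL00, hv2, smul_lie, lie_smul]
  have h3 : (a + ((α + k : ℤ) : ℂ)) = (α : ℂ) + (a + (k : ℂ)) := by push_cast; ring
  rw [h3]; simp [add_smul]

/-- Part 1, `C` case as a standalone lemma. -/
lemma part1C (𝔟 : BlockData B) (gr : GradedBMod 𝔟 V) (a : ℂ) (k : ℤ) (v : V)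
    (hv : v ∈ gr.piece k ⊓
        Module.End.eigenspace (LieModule.toEnd ℂ B V (𝔟.L 0 0)) (a + (k : ℂ))) :
    ⁅𝔟.C, v⁆ ∈ gr.piece k ⊓
        Module.End.eigenspace (LieModule.toEnd ℂ B V (𝔟.L 0 0)) (a + (k : ℂ)) := by
  obtain ⟨hv1, hv2⟩ := Submodule.mem_inf.mp hv
  rw [Module.End.mem_eigenspace_iff, LieModule.toEnd_apply_apply] at hv2
  rw [Submodule.mem_inf]
  refine ⟨gr.lie_C_mem k v hv1, ?_⟩
  rw [Module.End.mem_eigenspace_iff, LieModule.toEnd_apply_apply]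
  have hLC : ⁅𝔟.L 0 0, 𝔟.C⁆ = 0 := by
    rw [← lie_skew, 𝔟.central, neg_zero]
  have hleib : ⁅𝔟.L 0 0, ⁅𝔟.C, v⁆⁆
      = ⁅⁅𝔟.L 0 0, 𝔟.C⁆, v⁆ + ⁅𝔟.C, ⁅𝔟.L 0 0, v⁆⁆ := leibniz_lie _ _ _
  rw [hleib, hLC, zero_lie, zero_add, hv2, lie_smul]

/-- For each `a ∈ ℂ` the subspace `V[a] = ⊕ₖ {v ∈ V_k : L(0,0)·v = (a+k)·v}`
is a graded `𝔅`-submodule of `V` (its graded pieces are stable under the action of all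
`L(α,i)` and `C`, with the correct degree shift). Moreover, if `V` is nonzero, irreducible
and quasifinite, then there exists `a ∈ ℂ` such that `V = V[a]`, i.e. `L(0,0)` acts on each
graded piece `V_k` as the scalar `a + k`. -/
theorem block_eigenvalue_decomposition
    (𝔟 : BlockData B) (gr : GradedBMod 𝔟 V) :
    (∀ a : ℂ,
      (∀ (α : ℤ) (i : ℕ) (k : ℤ) (v : V),
        v ∈ gr.piece k ⊓
          Module.End.eigenspace (LieModule.toEnd ℂ B V (𝔟.L 0 0)) (a + (k : ℂ)) →
        ⁅𝔟.L α i, v⁆ ∈ gr.piece (α + k) ⊓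
          Module.End.eigenspace (LieModule.toEnd ℂ B V (𝔟.L 0 0)) (a + ((α + k : ℤ) : ℂ))) ∧
      (∀ (k : ℤ) (v : V),
        v ∈ gr.piece k ⊓
          Module.End.eigenspace (LieModule.toEnd ℂ B V (𝔟.L 0 0)) (a + (k : ℂ)) →
        ⁅𝔟.C, v⁆ ∈ gr.piece k ⊓
          Module.End.eigenspace (LieModule.toEnd ℂ B V (𝔟.L 0 0)) (a + (k : ℂ)))) ∧
    ((∃ v : V, v ≠ 0) → gr.Irreducible → gr.Quasifinite →
      ∃ a : ℂ, ∀ (k : ℤ) (v : V), v ∈ gr.piece k → ⁅𝔟.L 0 0, v⁆ = (a + (k : ℂ)) • v) := by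
  classical
  set T := LieModule.toEnd ℂ B V (𝔟.L 0 0) with hT
  refine ⟨fun a => ⟨part1L 𝔟 gr a, part1C 𝔟 gr a⟩, ?_⟩
  intro hne hirr hqf
  -- T preserves each piece
  have hTk : ∀ k : ℤ, ∀ x ∈ gr.piece k, T x ∈ gr.piece k := by
    intro k x hx
    have := gr.lie_L_mem 0 0 k x hx
    rwa [zero_add] at this
  -- find a nonzero piece
  have htop : (⨆ k, gr.piece k) = ⊤ := gr.isInternal.submodule_iSup_eq_top
  have hexk : ∃ k, gr.piece k ≠ ⊥ := by
    by_contra h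
    push_neg at h
    obtain ⟨v, hv⟩ := hne
    have hvmem : v ∈ (⨆ k, gr.piece k) := htop ▸ Submodule.mem_top
    rw [show (⨆ k, gr.piece k) = ⊥ by simp [h]] at hvmem
    exact hv (Submodule.mem_bot ℂ |>.mp hvmem)
  obtain ⟨k0, hk0⟩ := hexk
  haveI := hqf k0
  haveI : Nontrivial (gr.piece k0) := Submodule.nontrivial_iff_ne_bot.mpr hk0
  -- eigenvector of T on piece k0
  set f : gr.piece k0 →ₗ[ℂ] gr.piece k0 := T.restrict (hTk k0) with hf
  obtain ⟨μ, hμ⟩ := Module.End.exists_eigenvalue f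
  obtain ⟨w, hw⟩ := hμ.exists_hasEigenvector
  have hw0 : (w : V) ≠ 0 := fun h => hw.2 (Subtype.ext h)
  have hTw : T (w : V) = μ • (w : V) := by
    have h1 := hw.apply_eq_smul
    have h2 : ((f w : gr.piece k0) : V) = T (w : V) := rfl
    calc T (w : V) = ((f w : gr.piece k0) : V) := h2.symm
      _ = ((μ • w : gr.piece k0) : V) := by rw [h1]
      _ = μ • (w : V) := rfl
  set a : ℂ := μ - (k0 : ℂ) with ha
  set S : ℤ → Submodule ℂ V :=
    fun k => gr.piece k ⊓ Module.End.eigenspace T (a + (k : ℂ)) with hS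
  set Wsub : Submodule ℂ V := ⨆ k, S k with hW
  -- Wsub is closed under the bracket by all of B
  have hlie : ∀ (x : B) (v : V), v ∈ Wsub → ⁅x, v⁆ ∈ Wsub := by
    intro x v hv
    let P : Submodule ℂ B :=
      { carrier := {x : B | ∀ v ∈ Wsub, ⁅x, v⁆ ∈ Wsub}
        add_mem' := fun hx hy v hv => by
          rw [add_lie]; exact Wsub.add_mem (hx v hv) (hy v hv)
        zero_mem' := fun v hv => by rw [zero_lie]; exact Wsub.zero_mem
        smul_mem' := fun c x hx v hv => by
          rw [smul_lie]; exact Wsub.smul_mem c (hx v hv) }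
    have hPtop : ∀ y : B, y ∈ P := by
      intro y
      have hy : y ∈ Submodule.span ℂ
          (Set.range (Sum.elim (fun p : ℤ × ℕ => 𝔟.L p.1 p.2) (fun _ : Unit => 𝔟.C))) := by
        rw [𝔟.span_top]; trivial
      refine Submodule.span_le.mpr ?_ hy
      rintro x ⟨s, rfl⟩
      cases s with
      | inl p =>
        intro v hv
        refine Submodule.iSup_induction S (motive := fun v => ⁅𝔟.L p.1 p.2, v⁆ ∈ Wsub) hv
          (fun k u hu => ?_) (by show ⁅𝔟.L p.1 p.2, (0 : V)⁆ ∈ Wsub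
                                 rw [lie_zero]; exact Wsub.zero_mem)
          (fun u₁ u₂ h1 h2 => by show ⁅𝔟.L p.1 p.2, u₁ + u₂⁆ ∈ Wsub
                                 rw [lie_add]; exact Wsub.add_mem h1 h2)
        show ⁅𝔟.L p.1 p.2, u⁆ ∈ Wsub
        exact Submodule.mem_iSup_of_mem (p.1 + k) (part1L 𝔟 gr a p.1 p.2 k u hu)
      | inr u =>
        intro v hv
        refine Submodule.iSup_induction S (motive := fun v => ⁅𝔟.C, v⁆ ∈ Wsub) hv
          (fun k u hu => ?_) (by show ⁅𝔟.C, (0 : V)⁆ ∈ Wsub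
                                 rw [lie_zero]; exact Wsub.zero_mem)
          (fun u₁ u₂ h1 h2 => by show ⁅𝔟.C, u₁ + u₂⁆ ∈ Wsub
                                 rw [lie_add]; exact Wsub.add_mem h1 h2)
        show ⁅𝔟.C, u⁆ ∈ Wsub
        exact Submodule.mem_iSup_of_mem k (part1C 𝔟 gr a k u hu)
    exact hPtop x v hv
  set W : LieSubmodule ℂ B V :=
    { Wsub with lie_mem := fun {x m} hm => hlie x m hm } with hWdef
  have hWcoe : (W : Submodule ℂ V) = Wsub := rfl
  -- the intersection computation
  have hind : iSupIndep gr.piece := gr.isInternal.submodule_iSupIndep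
  have hinf : ∀ j : ℤ, Wsub ⊓ gr.piece j = S j := by
    intro j
    refine le_antisymm ?_ (le_inf (le_iSup S j) inf_le_left)
    have h1 : Wsub ≤ S j ⊔ ⨆ (k) (_ : k ≠ j), S k := by
      refine iSup_le fun k => ?_
      by_cases h : k = j
      · subst h; exact le_sup_left
      · exact le_sup_of_le_right (le_iSup₂ (f := fun k (_ : k ≠ j) => S k) k h)
    have h2 : (⨆ (k) (_ : k ≠ j), S k) ≤ ⨆ (k) (_ : k ≠ j), gr.piece k :=
      iSup₂_le fun k h => le_trans inf_le_left (le_iSup₂ (f := fun k (_ : k ≠ j) => gr.piece k) k h)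
    calc Wsub ⊓ gr.piece j
        ≤ (S j ⊔ ⨆ (k) (_ : k ≠ j), S k) ⊓ gr.piece j := inf_le_inf_right _ h1
      _ = S j ⊔ (⨆ (k) (_ : k ≠ j), S k) ⊓ gr.piece j :=
          sup_inf_assoc_of_le _ inf_le_left
      _ ≤ S j ⊔ (⨆ (k) (_ : k ≠ j), gr.piece k) ⊓ gr.piece j :=
          sup_le_sup_left (inf_le_inf_right _ h2) _
      _ = S j ⊔ ⊥ := by rw [disjoint_iff.mp (hind j).symm]
      _ = S j := sup_bot_eq _
  have hgraded : gr.IsGradedSubmodule W := by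
    show (W : Submodule ℂ V) = ⨆ k, (W : Submodule ℂ V) ⊓ gr.piece k
    rw [hWcoe]
    conv_lhs => rw [hW]
    exact iSup_congr fun k => (hinf k).symm
  -- W is nonzero
  have hwS : (w : V) ∈ S k0 := by
    refine Submodule.mem_inf.mpr ⟨w.2, Module.End.mem_eigenspace_iff.mpr ?_⟩
    rw [hTw]
    congr 1
    rw [ha]; ring
  have hWne : W ≠ ⊥ := by
    intro h
    have : (w : V) ∈ (⊥ : LieSubmodule ℂ B V) := h ▸ Submodule.mem_iSup_of_mem k0 hwS
    exact hw0 ((LieSubmodule.mem_bot _).mp this)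
  have hWtop : W = ⊤ := (hirr.2 W hgraded).resolve_left hWne
  refine ⟨a, fun k v hv => ?_⟩
  have hWsubtop : Wsub = ⊤ := by
    rw [← hWcoe, hWtop]; rfl
  have hvS : v ∈ S k := by
    rw [← hinf k, hWsubtop]
    exact ⟨Submodule.mem_top, hv⟩
  have h4 := (Submodule.mem_inf.mp hvS).2
  rw [Module.End.mem_eigenspace_iff, hT, LieModule.toEnd_apply_apply] at h4
  exact h4
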